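/- The function u(x,t) = 10 − (1/2)·cos(5 + t) + 4·tanh(6 + 1.6·t + (4/15)·t³ − 0.4·x − (t²/25)·sin(5 + t) − (2·t/25)·cos(5 + t)) solves the variable-coefficient forced Burgers equation u_t + ((2 + t²)/5)·u·u_x − (2 + t²)·u_xx = (1/2)·sin(5 + t) for all (x,t) ∈ ℝ². (This is the vc-FBE with both a variable dispersive coefficient b(t) = −(2 + t²) and a variable external-force term m(t) = (1/2)·sin(t + 5), arising from b1 = 0, b2(t) = −2 − t², p = −5, q = 10, L = 4, w = 6 in the general solution formula; the two variable coefficients change both the amplitude of the background and the velocity of the soliton.) -/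

import Mathlib

lemma my_hasDerivAt_tanh (x : ℝ) :
    HasDerivAt Real.tanh (1 - Real.tanh x ^ 2) x := by
  have hc : Real.cosh x ≠ 0 := (Real.cosh_pos x).ne'
  have h := (Real.hasDerivAt_sinh x).div (Real.hasDerivAt_cosh x) hc
  have heq : (Real.cosh x * Real.cosh x - Real.sinh x * Real.sinh x) / Real.cosh x ^ 2
      = 1 - Real.tanh x ^ 2 := by
    rw [Real.tanh_eq_sinh_div_cosh]
    have h1 := Real.cosh_sq_sub_sinh_sq x
    field_simp
  rw [heq] at h
  have hfun : Real.tanh = fun y => Real.sinh y / Real.cosh y := by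
    funext y; exact Real.tanh_eq_sinh_div_cosh y
  rw [hfun] at h ⊢
  exact h

/-- `u(x,t) = 10 − (1/2)·cos(5+t)
+ 4·tanh(6 + 1.6t + (4/15)t³ − 0.4x − (t²/25)·sin(5+t) − (2t/25)·cos(5+t))`
solves `u_t + ((2 + t²)/5)·u·u_x − (2 + t²)·u_xx = (1/2)·sin(5+t)` on all of ℝ². -/
theorem example4_solves_vcFBE :
    ∀ x t : ℝ,
      deriv (fun t' => 10 - (1 / 2) * Real.cos (5 + t')
          + 4 * Real.tanh (6 + 1.6 * t' + (4 / 15) * t' ^ 3 - 0.4 * x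
              - (t' ^ 2 / 25) * Real.sin (5 + t') - (2 * t' / 25) * Real.cos (5 + t'))) t
        + ((2 + t ^ 2) / 5) * (10 - (1 / 2) * Real.cos (5 + t)
            + 4 * Real.tanh (6 + 1.6 * t + (4 / 15) * t ^ 3 - 0.4 * x
                - (t ^ 2 / 25) * Real.sin (5 + t) - (2 * t / 25) * Real.cos (5 + t)))
            * deriv (fun x' => 10 - (1 / 2) * Real.cos (5 + t)
                + 4 * Real.tanh (6 + 1.6 * t + (4 / 15) * t ^ 3 - 0.4 * x'
                    - (t ^ 2 / 25) * Real.sin (5 + t) - (2 * t / 25) * Real.cos (5 + t))) x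
        - (2 + t ^ 2) * deriv (deriv (fun x' => 10 - (1 / 2) * Real.cos (5 + t)
                + 4 * Real.tanh (6 + 1.6 * t + (4 / 15) * t ^ 3 - 0.4 * x'
                    - (t ^ 2 / 25) * Real.sin (5 + t) - (2 * t / 25) * Real.cos (5 + t)))) x
        = (1 / 2) * Real.sin (5 + t) := by
  intro x t
  -- abbreviations
  have h5 : ∀ t' : ℝ, HasDerivAt (fun y : ℝ => 5 + y) 1 t' := fun t' => by
    simpa using (hasDerivAt_id t').const_add (5 : ℝ)
  have hs : HasDerivAt (fun t' => Real.sin (5 + t')) (Real.cos (5 + t)) t := by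
    exact ((Real.hasDerivAt_sin (5 + t)).comp t (h5 t)).congr_deriv (by ring)
  have hc : HasDerivAt (fun t' => Real.cos (5 + t')) (-Real.sin (5 + t)) t := by
    exact ((Real.hasDerivAt_cos (5 + t)).comp t (h5 t)).congr_deriv (by ring)
  -- time derivative of the tanh argument
  have hg : HasDerivAt (fun t' : ℝ => 6 + 1.6 * t' + (4 / 15) * t' ^ 3 - 0.4 * x
      - (t' ^ 2 / 25) * Real.sin (5 + t') - (2 * t' / 25) * Real.cos (5 + t'))
      (1.6 + (4 / 15) * (3 * t ^ 2)
        - ((2 * t / 25) * Real.sin (5 + t) + (t ^ 2 / 25) * Real.cos (5 + t))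
        - ((2 / 25) * Real.cos (5 + t) + (2 * t / 25) * (-Real.sin (5 + t)))) t := by
    have hA : HasDerivAt (fun t' : ℝ => 6 + 1.6 * t') 1.6 t := by
      simpa using ((hasDerivAt_id t).const_mul (1.6 : ℝ)).const_add (6 : ℝ)
    have hB : HasDerivAt (fun t' : ℝ => (4 / 15) * t' ^ 3) ((4 / 15) * (3 * t ^ 2)) t := by
      simpa using (hasDerivAt_pow 3 t).const_mul ((4 : ℝ) / 15)
    have hC : HasDerivAt (fun t' : ℝ => (t' ^ 2 / 25) * Real.sin (5 + t'))
        ((2 * t / 25) * Real.sin (5 + t) + (t ^ 2 / 25) * Real.cos (5 + t)) t := by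
      have := ((hasDerivAt_pow 2 t).div_const 25).mul hs
      exact this.congr_deriv (by norm_num)
    have hD : HasDerivAt (fun t' : ℝ => (2 * t' / 25) * Real.cos (5 + t'))
        ((2 / 25) * Real.cos (5 + t) + (2 * t / 25) * (-Real.sin (5 + t))) t := by
      have := (((hasDerivAt_id t).const_mul (2 : ℝ)).div_const 25).mul hc
      exact this.congr_deriv (by simp only [id]; ring)
    exact (((hA.add hB).sub_const (0.4 * x)).sub hC).sub hD
  have hTt := (my_hasDerivAt_tanh _).comp t hg
  simp only [Function.comp_def] at hTt
  have htime : HasDerivAt (fun t' => 10 - (1 / 2) * Real.cos (5 + t')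
          + 4 * Real.tanh (6 + 1.6 * t' + (4 / 15) * t' ^ 3 - 0.4 * x
              - (t' ^ 2 / 25) * Real.sin (5 + t') - (2 * t' / 25) * Real.cos (5 + t'))) _ t :=
    ((hc.const_mul ((1:ℝ) / 2)).const_sub 10).add (hTt.const_mul 4)
  -- spatial derivative
  have hθ : ∀ x' : ℝ, HasDerivAt (fun x'' : ℝ => 6 + 1.6 * t + (4 / 15) * t ^ 3 - 0.4 * x''
      - (t ^ 2 / 25) * Real.sin (5 + t) - (2 * t / 25) * Real.cos (5 + t)) (-(0.4)) x' := by
    intro x'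
    have := ((((hasDerivAt_id x').const_mul (0.4 : ℝ)).const_sub
        (6 + 1.6 * t + (4 / 15) * t ^ 3)).sub_const
        ((t ^ 2 / 25) * Real.sin (5 + t))).sub_const ((2 * t / 25) * Real.cos (5 + t))
    simpa using this
  have hTx : ∀ x' : ℝ, HasDerivAt (fun x'' : ℝ => Real.tanh (6 + 1.6 * t + (4 / 15) * t ^ 3
      - 0.4 * x'' - (t ^ 2 / 25) * Real.sin (5 + t) - (2 * t / 25) * Real.cos (5 + t)))
      ((1 - Real.tanh (6 + 1.6 * t + (4 / 15) * t ^ 3 - 0.4 * x'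
        - (t ^ 2 / 25) * Real.sin (5 + t) - (2 * t / 25) * Real.cos (5 + t)) ^ 2) * (-(0.4))) x' :=
    fun x' => (my_hasDerivAt_tanh _).comp x' (hθ x')
  have hfx : ∀ x' : ℝ, HasDerivAt (fun x'' : ℝ => 10 - (1 / 2) * Real.cos (5 + t)
      + 4 * Real.tanh (6 + 1.6 * t + (4 / 15) * t ^ 3 - 0.4 * x''
        - (t ^ 2 / 25) * Real.sin (5 + t) - (2 * t / 25) * Real.cos (5 + t)))
      (4 * ((1 - Real.tanh (6 + 1.6 * t + (4 / 15) * t ^ 3 - 0.4 * x'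
        - (t ^ 2 / 25) * Real.sin (5 + t) - (2 * t / 25) * Real.cos (5 + t)) ^ 2) * (-(0.4)))) x' :=
    fun x' => ((hTx x').const_mul 4).const_add (10 - (1 / 2) * Real.cos (5 + t))
  have hd1 : deriv (fun x' : ℝ => 10 - (1 / 2) * Real.cos (5 + t)
      + 4 * Real.tanh (6 + 1.6 * t + (4 / 15) * t ^ 3 - 0.4 * x'
        - (t ^ 2 / 25) * Real.sin (5 + t) - (2 * t / 25) * Real.cos (5 + t)))
      = fun x' : ℝ => 4 * ((1 - Real.tanh (6 + 1.6 * t + (4 / 15) * t ^ 3 - 0.4 * x'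
        - (t ^ 2 / 25) * Real.sin (5 + t) - (2 * t / 25) * Real.cos (5 + t)) ^ 2) * (-(0.4))) :=
    funext fun x' => (hfx x').deriv
  -- second spatial derivative
  have hsq : HasDerivAt (fun x' : ℝ => Real.tanh (6 + 1.6 * t + (4 / 15) * t ^ 3 - 0.4 * x'
      - (t ^ 2 / 25) * Real.sin (5 + t) - (2 * t / 25) * Real.cos (5 + t)) ^ 2)
      (2 * Real.tanh (6 + 1.6 * t + (4 / 15) * t ^ 3 - 0.4 * x
        - (t ^ 2 / 25) * Real.sin (5 + t) - (2 * t / 25) * Real.cos (5 + t))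
        * ((1 - Real.tanh (6 + 1.6 * t + (4 / 15) * t ^ 3 - 0.4 * x
        - (t ^ 2 / 25) * Real.sin (5 + t) - (2 * t / 25) * Real.cos (5 + t)) ^ 2) * (-(0.4)))) x := by
    have := (hTx x).pow 2
    exact this.congr_deriv (by norm_num)
  have hsecond := ((hsq.const_sub 1).mul_const (-(0.4))).const_mul (4 : ℝ)
  rw [htime.deriv, (hfx x).deriv, hd1, hsecond.deriv]
  set T := Real.tanh (6 + 1.6 * t + (4 / 15) * t ^ 3 - 0.4 * x
    - (t ^ 2 / 25) * Real.sin (5 + t) - (2 * t / 25) * Real.cos (5 + t)) with hT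
  norm_num
  ring
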